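/- Let b > 1 and set a₃ := ((b³ + 1)/4 − (b²/2)·log b)/(b + 1). Then π(b² − 1)²/8 − 2π·∫_1^b (−r²/4 + (b/2)·log r + a₃)·r dr = (π/4)·(2b³ − b² − 2b²·log b − 2b + 1), and this quantity is strictly positive. (Hence, at fixed area, the torsion energy with boundary mean zero satisfies T(Ω₁) > T(Ω₂) for the annulus Ω₁ = {1 < |x| < b} versus the disk Ω₂ = {|x| < √(b² − 1)}.) -/

import Mathlib

open Real intervalIntegral

lemma integral_aux (b : ℝ) (hb : 1 < b) (a₃ : ℝ) :
    (∫ r in (1 : ℝ)..b, (-r ^ 2 / 4 + (b / 2) * Real.log r + a₃) * r) =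
      -(b ^ 4 - 1) / 16 + (b / 2) * (b ^ 2 / 2 * Real.log b - b ^ 2 / 4 + 1 / 4)
        + a₃ * (b ^ 2 - 1) / 2 := by
  have key : ∀ x ∈ Set.uIcc (1 : ℝ) b,
      HasDerivAt (fun r : ℝ => -r ^ 4 / 16 + (b / 2) * (r ^ 2 / 2 * Real.log r - r ^ 2 / 4)
        + a₃ * r ^ 2 / 2) ((-x ^ 2 / 4 + (b / 2) * Real.log x + a₃) * x) x := by
    intro x hx
    have hx0 : 0 < x := by
      rcases Set.mem_uIcc.mp hx with h | h
      · linarith [h.1]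
      · linarith [h.1, hb]
    have h1 : HasDerivAt (fun r : ℝ => r ^ 2 / 2 * Real.log r - r ^ 2 / 4)
        (x * Real.log x) x := by
      have := ((hasDerivAt_pow 2 x).div_const 2).mul (Real.hasDerivAt_log hx0.ne')
      have h2 := this.sub ((hasDerivAt_pow 2 x).div_const 4)
      convert h2 using 1
      · rfl
      · rfl
      · ext r; simp only [Pi.add_apply, Pi.neg_apply, Pi.sub_apply, Pi.mul_apply]
      field_simp
      ring
    have h3 := (((hasDerivAt_pow 4 x).div_const 16).neg).add (h1.const_mul (b / 2))
    have h4 := h3.add (((hasDerivAt_pow 2 x).div_const 2).const_mul a₃)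
    convert h4 using 1
    · rfl
    · rfl
    · ext r; simp only [Pi.add_apply, Pi.neg_apply, Pi.sub_apply, Pi.mul_apply]; ring
    · push_cast; ring
  have hcont : IntervalIntegrable (fun r : ℝ => (-r ^ 2 / 4 + (b / 2) * Real.log r + a₃) * r)
      MeasureTheory.volume 1 b := by
    apply ContinuousOn.intervalIntegrable
    apply ContinuousOn.mul _ continuousOn_id
    apply ContinuousOn.add
    apply ContinuousOn.add
    · exact (continuousOn_pow 2).neg.div_const 4
    · exact continuousOn_const.mul (Real.continuousOn_log.mono (by
        intro x hx hx0
        have : 0 < x := by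
          rcases Set.mem_uIcc.mp hx with h | h
          · linarith [h.1]
          · linarith [h.1, hb]
        simp at hx0; exact this.ne' hx0))
    · exact continuousOn_const
  rw [intervalIntegral.integral_eq_sub_of_hasDerivAt key hcont]
  simp [Real.log_one]
  ring

theorem stmt_14 (b : ℝ) (hb : 1 < b) (a₃ : ℝ)
    (ha₃ : a₃ = ((b ^ 3 + 1) / 4 - (b ^ 2 / 2) * Real.log b) / (b + 1)) :
    (π * (b ^ 2 - 1) ^ 2 / 8 -
        2 * π * ∫ r in (1 : ℝ)..b, (-r ^ 2 / 4 + (b / 2) * Real.log r + a₃) * r) =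
      (π / 4) * (2 * b ^ 3 - b ^ 2 - 2 * b ^ 2 * Real.log b - 2 * b + 1) ∧
    0 < (π / 4) * (2 * b ^ 3 - b ^ 2 - 2 * b ^ 2 * Real.log b - 2 * b + 1) := by
  have hb1 : b + 1 ≠ 0 := by linarith
  constructor
  · rw [integral_aux b hb a₃, ha₃]
    field_simp
    ring
  · have hlog : Real.log b < b - 1 :=
      Real.log_lt_sub_one_of_pos (by linarith) (by linarith)
    have h : 0 < 2 * b ^ 3 - b ^ 2 - 2 * b ^ 2 * Real.log b - 2 * b + 1 := by
      nlinarith [sq_nonneg (b - 1), sq_nonneg b, mul_pos (by positivity : (0:ℝ) < 2 * b ^ 2) (sub_pos.mpr hlog)]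
    positivity
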